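/- Let w assign a nonnegative integer w(e) to every unordered pair e of distinct vertices of V, and let each agent i have the linear centrality C_i(g) = C_w(i,g) = Σ_{e ∈ E(g), i ∈ e} w(e). Then for every choice of thresholds (θ_i), θ_i ∈ ℝ, the truncated linear centrality game with thresholds (θ_i) has at least one APSN. -/

import Mathlib

open SimpleGraph

/-- Degree of vertex `i` in network `g`. -/
noncomputable def deg {V : Type*} (g : SimpleGraph V) (i : V) : ℕ :=
  Nat.card (g.neighborSet i)

/-- The network `g` with the (missing) edge `ij` added. -/
def addE {V : Type*} (g : SimpleGraph V) (i j : V) : SimpleGraph V :=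
  g ⊔ SimpleGraph.fromEdgeSet {s(i, j)}

/-- The network `g` with the edge `ij` removed. -/
def delE {V : Type*} (g : SimpleGraph V) (i j : V) : SimpleGraph V :=
  g.deleteEdges {s(i, j)}

/-- Utility of agent `i` in the game with centralities `C` and edge cost `c`. -/
noncomputable def util {V : Type*} (C : V → SimpleGraph V → ℝ) (c : ℝ) (i : V)
    (g : SimpleGraph V) : ℝ :=
  C i g - c * (deg g i)

/-- Adding the missing edge `ij` is an improving move. -/
def ImprovingAdd {V : Type*} (C : V → SimpleGraph V → ℝ) (c : ℝ) (g : SimpleGraph V)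
    (i j : V) : Prop :=
  util C c i (addE g i j) ≥ util C c i g ∧ util C c j (addE g i j) ≥ util C c j g ∧
    (util C c i (addE g i j) > util C c i g ∨ util C c j (addE g i j) > util C c j g)

/-- Deleting the edge `ij` is an improving move. -/
def ImprovingDel {V : Type*} (C : V → SimpleGraph V → ℝ) (c : ℝ) (g : SimpleGraph V)
    (i j : V) : Prop :=
  util C c i (delE g i j) > util C c i g ∨ util C c j (delE g i j) > util C c j g

/-- `g` is pairwise stable at edge cost `c`. -/
def PairwiseStable {V : Type*} (C : V → SimpleGraph V → ℝ) (c : ℝ) (g : SimpleGraph V) : Prop :=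
  (∀ i j : V, i ≠ j → ¬ g.Adj i j → ¬ ImprovingAdd C c g i j) ∧
  (∀ i j : V, g.Adj i j → ¬ ImprovingDel C c g i j)

/-- `g` is asymptotically pairwise stable. -/
def APSN {V : Type*} (C : V → SimpleGraph V → ℝ) (g : SimpleGraph V) : Prop :=
  ∃ ε₀ : ℝ, 0 < ε₀ ∧ ∀ c : ℝ, 0 < c → c < ε₀ → PairwiseStable C c g

/-- Axiom 1: the centrality of agent `i` is increasing. -/
def Axiom1 {V : Type*} (C : V → SimpleGraph V → ℝ) (i : V) : Prop :=
  ∀ (g : SimpleGraph V) (j : V), j ≠ i → ¬ g.Adj i j → C i (addE g i j) > C i g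

/-- Axiom 1′: the centrality of agent `i` is decreasing. -/
def Axiom1' {V : Type*} (C : V → SimpleGraph V → ℝ) (i : V) : Prop :=
  ∀ (g : SimpleGraph V) (j : V), j ≠ i → ¬ g.Adj i j → C i (addE g i j) < C i g

/-- Axiom 2: the centrality of agent `i` is componentwise. -/
def Axiom2 {V : Type*} (C : V → SimpleGraph V → ℝ) (i : V) : Prop :=
  ∀ (g : SimpleGraph V) (j : V), j ≠ i → ¬ g.Adj i j →
    ((g.Reachable i j → C i (addE g i j) > C i g) ∧
     (¬ g.Reachable i j → C i (addE g i j) ≤ C i g))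

/-- Axiom 2′: the centrality of agent `i` is peripheral. -/
def Axiom2' {V : Type*} (C : V → SimpleGraph V → ℝ) (i : V) : Prop :=
  ∀ (g : SimpleGraph V) (j : V), j ≠ i → ¬ g.Adj i j →
    ((g.Reachable i j → C i (addE g i j) ≤ C i g) ∧
     (¬ g.Reachable i j → C i (addE g i j) > C i g))

/-- The centrality of agent `i` is degree homophilic with (strictly increasing) `f`. -/
def DegreeHomophilic {V : Type*} (C : V → SimpleGraph V → ℝ) (i : V) (f : ℕ → ℤ) : Prop :=
  ∀ (g : SimpleGraph V) (j : V), j ≠ i → ¬ g.Adj i j →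
    (C i (addE g i j) > C i g ↔ (deg g j : ℤ) ≤ f (deg g i))

open scoped Classical in
/-- The linear centrality of `i` in `g` with weights `w` on unordered pairs:
`∑_{e ∈ E(g), i ∈ e} w(e)`. -/
noncomputable def Clin {V : Type*} [Fintype V] (w : Sym2 V → ℕ) (i : V)
    (g : SimpleGraph V) : ℝ :=
  ∑ j : V, if g.Adj i j then (w s(i, j) : ℝ) else 0

set_option linter.unusedSectionVars false
set_option maxHeartbeats 1000000

section Aux
open scoped Classical
variable {V : Type*} [Fintype V] {w : Sym2 V → ℕ} {g : SimpleGraph V} {i j : V}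

lemma addE_comm (g : SimpleGraph V) (i j : V) : addE g i j = addE g j i := by
  unfold addE; rw [Sym2.eq_swap]

lemma delE_comm (g : SimpleGraph V) (i j : V) : delE g i j = delE g j i := by
  unfold delE; rw [Sym2.eq_swap]

lemma addE_adj (g : SimpleGraph V) (i j a b : V) :
    (addE g i j).Adj a b ↔ g.Adj a b ∨ (s(a,b) = s(i,j) ∧ a ≠ b) := by
  simp [addE, fromEdgeSet_adj]

lemma delE_adj (g : SimpleGraph V) (i j a b : V) :
    (delE g i j).Adj a b ↔ g.Adj a b ∧ s(a,b) ≠ s(i,j) := by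
  simp [delE, deleteEdges_adj]

lemma Clin_addE (hij : i ≠ j) (hna : ¬ g.Adj i j) :
    Clin w i (addE g i j) = Clin w i g + w s(i,j) := by
  unfold Clin
  rw [← Finset.sum_erase_add _ _ (Finset.mem_univ j),
      ← Finset.sum_erase_add _ _ (Finset.mem_univ j)]
  have h1 : ∑ k ∈ Finset.univ.erase j, (if (addE g i j).Adj i k then (w s(i,k) : ℝ) else 0)
      = ∑ k ∈ Finset.univ.erase j, (if g.Adj i k then (w s(i,k) : ℝ) else 0) := by
    refine Finset.sum_congr rfl fun k hk => ?_
    have hkj : k ≠ j := (Finset.mem_erase.mp hk).1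
    refine if_congr ?_ rfl rfl
    rw [addE_adj]
    constructor
    · rintro (h | ⟨he, _⟩)
      · exact h
      · exact absurd (Sym2.congr_right.mp he) hkj
    · exact Or.inl
  have h2 : (if (addE g i j).Adj i j then (w s(i,j) : ℝ) else 0) = w s(i,j) := by
    rw [if_pos]; rw [addE_adj]; exact Or.inr ⟨rfl, hij⟩
  have h3 : (if g.Adj i j then (w s(i,j) : ℝ) else 0) = 0 := if_neg hna
  rw [h1, h2, h3]; ring

lemma Clin_delE (h : g.Adj i j) :
    Clin w i (delE g i j) = Clin w i g - w s(i,j) := by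
  unfold Clin
  rw [← Finset.sum_erase_add _ _ (Finset.mem_univ j),
      ← Finset.sum_erase_add _ _ (Finset.mem_univ j)]
  have h1 : ∑ k ∈ Finset.univ.erase j, (if (delE g i j).Adj i k then (w s(i,k) : ℝ) else 0)
      = ∑ k ∈ Finset.univ.erase j, (if g.Adj i k then (w s(i,k) : ℝ) else 0) := by
    refine Finset.sum_congr rfl fun k hk => ?_
    have hkj : k ≠ j := (Finset.mem_erase.mp hk).1
    refine if_congr ?_ rfl rfl
    rw [delE_adj]
    constructor
    · exact fun h => h.1
    · exact fun ha => ⟨ha, fun he => hkj (Sym2.congr_right.mp he)⟩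
  have h2 : (if (delE g i j).Adj i j then (w s(i,j) : ℝ) else 0) = 0 := by
    rw [if_neg]; rw [delE_adj]; rintro ⟨-, he⟩; exact he rfl
  have h3 : (if g.Adj i j then (w s(i,j) : ℝ) else 0) = w s(i,j) := if_pos h
  rw [h1, h2, h3]; ring

lemma deg_addE (hij : i ≠ j) (hna : ¬ g.Adj i j) :
    (deg (addE g i j) i : ℝ) = deg g i + 1 := by
  have hset : (addE g i j).neighborSet i = insert j (g.neighborSet i) := by
    ext k
    simp only [mem_neighborSet, Set.mem_insert_iff, addE_adj]
    constructor
    · rintro (h | ⟨he, hne⟩)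
      · exact Or.inr h
      · exact Or.inl (Sym2.congr_right.mp he)
    · rintro (rfl | h)
      · exact Or.inr ⟨rfl, hij⟩
      · exact Or.inl h
  have hjm : j ∉ g.neighborSet i := hna
  unfold deg
  rw [hset, Nat.card_coe_set_eq, Nat.card_coe_set_eq,
      Set.ncard_insert_of_notMem hjm]
  push_cast; ring

lemma deg_delE (h : g.Adj i j) :
    (deg (delE g i j) i : ℝ) = deg g i - 1 := by
  have hset : (delE g i j).neighborSet i = g.neighborSet i \ {j} := by
    ext k
    simp only [mem_neighborSet, Set.mem_diff, Set.mem_singleton_iff, delE_adj]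
    constructor
    · rintro ⟨ha, he⟩; exact ⟨ha, fun hk => he (by rw [hk])⟩
    · rintro ⟨ha, hk⟩; exact ⟨ha, fun he => hk (Sym2.congr_right.mp he)⟩
  have hjm : j ∈ g.neighborSet i := h
  have hpos : 0 < (g.neighborSet i).ncard := (Set.ncard_pos (Set.toFinite _)).mpr ⟨j, hjm⟩
  unfold deg
  rw [hset, Nat.card_coe_set_eq, Nat.card_coe_set_eq,
      Set.ncard_diff_singleton_of_mem hjm, Nat.cast_sub hpos]
  norm_num

end Aux


section Greedy
open scoped Classical
variable {V : Type*} [Fintype V] (w : Sym2 V → ℕ) (θ : V → ℝ)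

/-- ℝ-valued linear centrality of `i` w.r.t. an edge finset `E`. -/
noncomputable def CE (E : Finset (Sym2 V)) (i : V) : ℝ :=
  ∑ k : V, if s(i,k) ∈ E ∧ i ≠ k then (w s(i,k) : ℝ) else 0

noncomputable def step (E : Finset (Sym2 V)) (e : Sym2 V) : Finset (Sym2 V) :=
  if ¬ e.IsDiag ∧ 0 < w e ∧ (∀ i ∈ e, CE w E i < θ i) then insert e E else E

lemma CE_insert {E : Finset (Sym2 V)} {e : Sym2 V} (he : e ∉ E) (hd : ¬ e.IsDiag) (i : V) :
    CE w (insert e E) i = CE w E i + (if i ∈ e then (w e : ℝ) else 0) := by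
  by_cases hie : i ∈ e
  · rw [if_pos hie]
    obtain ⟨j, hspec⟩ : ∃ j, s(i, j) = e := ⟨Sym2.Mem.other hie, Sym2.other_spec hie⟩
    have hij : i ≠ j := by
      rintro rfl
      exact hd (by rw [← hspec]; exact Sym2.mk_isDiag_iff.mpr rfl)
    unfold CE
    rw [← Finset.sum_erase_add _ _ (Finset.mem_univ j),
        ← Finset.sum_erase_add _ _ (Finset.mem_univ j)]
    have h1 : ∑ k ∈ Finset.univ.erase j,
        (if s(i,k) ∈ insert e E ∧ i ≠ k then (w s(i,k) : ℝ) else 0)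
        = ∑ k ∈ Finset.univ.erase j, (if s(i,k) ∈ E ∧ i ≠ k then (w s(i,k) : ℝ) else 0) := by
      refine Finset.sum_congr rfl fun k hk => ?_
      have hkj : k ≠ j := (Finset.mem_erase.mp hk).1
      refine if_congr (and_congr_left fun _ => ?_) rfl rfl
      rw [Finset.mem_insert]
      constructor
      · rintro (hke | hkE)
        · exact absurd (Sym2.congr_right.mp (hke.trans hspec.symm)) hkj
        · exact hkE
      · exact Or.inr
    have h2 : (if s(i,j) ∈ insert e E ∧ i ≠ j then (w s(i,j) : ℝ) else 0) = w e := by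
      rw [if_pos ⟨Finset.mem_insert.mpr (Or.inl hspec), hij⟩, hspec]
    have h3 : (if s(i,j) ∈ E ∧ i ≠ j then (w s(i,j) : ℝ) else 0) = 0 := by
      rw [if_neg]; rintro ⟨hm, -⟩; exact he (hspec ▸ hm)
    rw [h1, h2, h3]; ring
  · rw [if_neg hie, add_zero]
    refine Finset.sum_congr rfl fun k _ => ?_
    refine if_congr (and_congr_left fun _ => ?_) rfl rfl
    rw [Finset.mem_insert]
    constructor
    · rintro (hke | hkE)
      · exact absurd (hke ▸ Sym2.mem_mk_left i k) hie
      · exact hkE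
    · exact Or.inr

lemma CE_le_insert {E : Finset (Sym2 V)} {e : Sym2 V} (he : e ∉ E) (hd : ¬ e.IsDiag) (i : V) :
    CE w E i ≤ CE w (insert e E) i := by
  rw [CE_insert w he hd i]
  have : (0:ℝ) ≤ if i ∈ e then (w e : ℝ) else 0 := by positivity
  linarith

/-- Invariant (A). -/
def InvA (E : Finset (Sym2 V)) : Prop :=
  ∀ e ∈ E, ¬ e.IsDiag ∧ 0 < w e ∧ ∀ i ∈ e, CE w E i < θ i + w e

lemma greedy_fold : ∀ (L : List (Sym2 V)) (E : Finset (Sym2 V)),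
    L.Pairwise (fun a b => w b ≤ w a) →
    (∀ e' ∈ E, ∀ e ∈ L, w e ≤ w e') →
    InvA w θ E →
    (E ⊆ L.foldl (step w θ) E ∧ InvA w θ (L.foldl (step w θ) E) ∧
      (∀ i, CE w E i ≤ CE w (L.foldl (step w θ) E) i) ∧
      (∀ e ∈ L, ¬ e.IsDiag → 0 < w e → e ∉ L.foldl (step w θ) E →
        ∃ i ∈ e, θ i ≤ CE w (L.foldl (step w θ) E) i)) := by
  intro L
  induction L with
  | nil =>
    intro E _ _ hA
    exact ⟨Finset.Subset.refl _, hA, fun i => le_refl _, fun e he => absurd he List.not_mem_nil⟩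
  | cons e L ih =>
    intro E hp hmax hA
    rw [List.pairwise_cons] at hp
    obtain ⟨hhead, htail⟩ := hp
    simp only [List.foldl_cons]
    by_cases hcond : ¬ e.IsDiag ∧ 0 < w e ∧ (∀ i ∈ e, CE w E i < θ i)
    · -- condition holds
      by_cases heE : e ∈ E
      · -- insert is a no-op
        have hstep : step w θ E e = E := by
          rw [step, if_pos hcond, Finset.insert_eq_self.mpr heE]
        rw [hstep]
        obtain ⟨hsub, hA', hmono, hB⟩ := ih E htail
          (fun e' he' f hf => hmax e' he' f (List.mem_cons_of_mem e hf)) hA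
        refine ⟨hsub, hA', hmono, ?_⟩
        intro f hf hfd hfw hfE
        rcases List.mem_cons.mp hf with rfl | hf'
        · exact absurd (hsub heE) hfE
        · exact hB f hf' hfd hfw hfE
      · -- real insertion
        have hstep : step w θ E e = insert e E := by rw [step, if_pos hcond]
        rw [hstep]
        obtain ⟨hd, hw, hsat⟩ := hcond
        have hmax1 : ∀ e' ∈ insert e E, ∀ f ∈ L, w f ≤ w e' := by
          intro e' he' f hf
          rcases Finset.mem_insert.mp he' with rfl | he'
          · exact hhead f hf
          · exact hmax e' he' f (List.mem_cons_of_mem e hf)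
        have hA1 : InvA w θ (insert e E) := by
          intro e' he'
          rcases Finset.mem_insert.mp he' with rfl | he'
          · refine ⟨hd, hw, fun i hi => ?_⟩
            rw [CE_insert w heE hd i, if_pos hi]
            have := hsat i hi
            linarith
          · obtain ⟨hd', hw', hlt'⟩ := hA e' he'
            refine ⟨hd', hw', fun i hi => ?_⟩
            rw [CE_insert w heE hd i]
            by_cases hie : i ∈ e
            · rw [if_pos hie]
              have h1 := hsat i hie
              have h2 : (w e : ℝ) ≤ w e' := by
                exact_mod_cast hmax e' he' e List.mem_cons_self
              linarith
            · rw [if_neg hie, add_zero]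
              exact hlt' i hi
        obtain ⟨hsub, hA', hmono, hB⟩ := ih (insert e E) htail hmax1 hA1
        refine ⟨fun x hx => hsub (Finset.mem_insert_of_mem hx), hA', ?_, ?_⟩
        · intro i
          exact le_trans (CE_le_insert w heE hd i) (hmono i)
        · intro f hf hfd hfw hfE
          rcases List.mem_cons.mp hf with rfl | hf'
          · exact absurd (hsub (Finset.mem_insert_self f E)) hfE
          · exact hB f hf' hfd hfw hfE
    · -- condition fails: skip
      have hstep : step w θ E e = E := by rw [step, if_neg hcond]
      rw [hstep]
      obtain ⟨hsub, hA', hmono, hB⟩ := ih E htail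
        (fun e' he' f hf => hmax e' he' f (List.mem_cons_of_mem e hf)) hA
      refine ⟨hsub, hA', hmono, ?_⟩
      intro f hf hfd hfw hfE
      rcases List.mem_cons.mp hf with rfl | hf'
      · push_neg at hcond
        obtain ⟨i, hi, hsat⟩ := hcond hfd hfw
        exact ⟨i, hi, le_trans hsat (hmono i)⟩
      · exact hB f hf' hfd hfw hfE

end Greedy


section GoodMain
open scoped Classical
variable {V : Type*} [Fintype V] (w : Sym2 V → ℕ) (θ : V → ℝ)

lemma exists_good : ∃ E : Finset (Sym2 V),
    InvA w θ E ∧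
    ∀ e : Sym2 V, ¬ e.IsDiag → 0 < w e → e ∉ E → ∃ i ∈ e, θ i ≤ CE w E i := by
  haveI : IsTotal (Sym2 V) (fun a b => w b ≤ w a) := ⟨fun a b => le_total (w b) (w a)⟩
  haveI : IsTrans (Sym2 V) (fun a b => w b ≤ w a) := ⟨fun a b c hab hbc => le_trans hbc hab⟩
  set L : List (Sym2 V) := (Finset.univ : Finset (Sym2 V)).toList.insertionSort
    (fun a b => w b ≤ w a) with hL
  have hsort : L.Pairwise (fun a b => w b ≤ w a) := List.pairwise_insertionSort _ _
  have hmem : ∀ e : Sym2 V, e ∈ L := fun e => by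
    rw [hL, List.mem_insertionSort]; exact Finset.mem_toList.mpr (Finset.mem_univ e)
  have hA0 : InvA w θ (∅ : Finset (Sym2 V)) := fun e he => absurd he (Finset.notMem_empty e)
  obtain ⟨-, hA, -, hB⟩ := greedy_fold w θ L ∅ hsort
    (fun e' he' => absurd he' (Finset.notMem_empty e')) hA0
  exact ⟨L.foldl (step w θ) ∅, hA, fun e hd hw he => hB e (hmem e) hd hw he⟩

end GoodMain

theorem statement_15 {V : Type*} [Fintype V] (w : Sym2 V → ℕ) (θ : V → ℝ) :
    ∃ g : SimpleGraph V, APSN (fun i h => min (Clin w i h) (θ i)) g := by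
  classical
  obtain ⟨E, hA, hB⟩ := exists_good w θ
  set g : SimpleGraph V := fromEdgeSet ↑E with hg
  have hadj : ∀ i j : V, g.Adj i j ↔ s(i,j) ∈ E ∧ i ≠ j := by
    intro i j; rw [hg, fromEdgeSet_adj, Finset.mem_coe]
  have hbridge : ∀ i, Clin w i g = CE w E i := by
    intro i; unfold Clin CE
    exact Finset.sum_congr rfl fun k _ => by convert if_congr (hadj i k) rfl rfl
  have hutil : ∀ (c : ℝ) (i : V) (h : SimpleGraph V),
      util (fun i h => min (Clin w i h) (θ i)) c i h
        = min (Clin w i h) (θ i) - c * deg h i := fun _ _ _ => rfl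
  refine ⟨g, ?_⟩
  set d : V × V → ℝ := fun p =>
    if g.Adj p.1 p.2 then
      min (Clin w p.1 g) (θ p.1) - (Clin w p.1 g - w s(p.1, p.2)) else 1 with hd
  set D : Finset ℝ := insert 1 ((Finset.univ : Finset (V × V)).image d) with hD
  have hDne : D.Nonempty := ⟨1, Finset.mem_insert_self _ _⟩
  set ε₀ : ℝ := D.min' hDne with hε
  have hdpos : ∀ p : V × V, 0 < d p := by
    intro p
    rw [hd]; dsimp only
    by_cases hpa : g.Adj p.1 p.2
    · rw [if_pos hpa]
      obtain ⟨hmemE, hne⟩ := (hadj _ _).mp hpa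
      obtain ⟨hdiag, hw, hsat⟩ := hA s(p.1, p.2) hmemE
      have h1 : CE w E p.1 < θ p.1 + w s(p.1, p.2) := hsat p.1 (Sym2.mem_mk_left _ _)
      have h2 : (0:ℝ) < w s(p.1, p.2) := by exact_mod_cast hw
      rw [hbridge p.1]
      have h3 : CE w E p.1 - w s(p.1, p.2) < min (CE w E p.1) (θ p.1) :=
        lt_min (by linarith) (by linarith)
      linarith
    · rw [if_neg hpa]; norm_num
  have hεpos : 0 < ε₀ := by
    rw [hε]
    apply (Finset.lt_min'_iff D hDne).mpr
    intro b hb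
    rw [hD] at hb
    rcases Finset.mem_insert.mp hb with rfl | hb
    · norm_num
    · obtain ⟨p, -, rfl⟩ := Finset.mem_image.mp hb
      exact hdpos p
  have hεle : ∀ i j : V, g.Adj i j →
      ε₀ ≤ min (Clin w i g) (θ i) - (Clin w i g - w s(i,j)) := by
    intro i j hija
    have hmem : (min (Clin w i g) (θ i) - (Clin w i g - w s(i,j))) ∈ D := by
      rw [hD]
      apply Finset.mem_insert_of_mem
      refine Finset.mem_image.mpr ⟨(i, j), Finset.mem_univ _, ?_⟩
      rw [hd]; dsimp only; rw [if_pos hija]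
    exact Finset.min'_le D _ hmem
  refine ⟨ε₀, hεpos, ?_⟩
  intro c hc hcε
  constructor
  · -- no improving add
    intro i j hij hna himp
    obtain ⟨h1, h2, -⟩ := himp
    have hnotE : s(i,j) ∉ E := fun hm => hna ((hadj i j).mpr ⟨hm, hij⟩)
    have hnaji : ¬ g.Adj j i := fun h => hna h.symm
    by_cases hw0 : w s(i,j) = 0
    · have hC : Clin w i (addE g i j) = Clin w i g := by
        rw [Clin_addE hij hna, hw0]; push_cast; ring
      have hdeg := deg_addE hij hna
      rw [hutil, hutil, hC, hdeg] at h1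
      nlinarith
    · have hwpos : 0 < w s(i,j) := Nat.pos_of_ne_zero hw0
      obtain ⟨k, hk, hsat⟩ := hB s(i,j) (by rw [Sym2.mk_isDiag_iff]; exact hij) hwpos hnotE
      rw [← hbridge k] at hsat
      rcases Sym2.mem_iff.mp hk with rfl | rfl
      · -- k = i is saturated
        have hC : Clin w k (addE g k j) = Clin w k g + w s(k,j) := Clin_addE hij hna
        have hwn : (0:ℝ) ≤ w s(k,j) := by positivity
        have hmin1 : min (Clin w k (addE g k j)) (θ k) = θ k := by
          rw [hC]; exact min_eq_right (by linarith)
        have hmin2 : min (Clin w k g) (θ k) = θ k := min_eq_right hsat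
        have hdeg := deg_addE hij hna
        rw [hutil, hutil, hmin1, hmin2, hdeg] at h1
        nlinarith
      · -- k = j is saturated
        rw [addE_comm] at h2
        have hC : Clin w k (addE g k i) = Clin w k g + w s(k,i) :=
          Clin_addE (Ne.symm hij) hnaji
        have hwn : (0:ℝ) ≤ w s(k,i) := by positivity
        have hmin1 : min (Clin w k (addE g k i)) (θ k) = θ k := by
          rw [hC]; exact min_eq_right (by linarith)
        have hmin2 : min (Clin w k g) (θ k) = θ k := min_eq_right hsat
        have hdeg := deg_addE (Ne.symm hij) hnaji
        rw [hutil, hutil, hmin1, hmin2, hdeg] at h2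
        nlinarith
  · -- no improving del
    intro i j hija himp
    obtain ⟨hmemE, hijne⟩ := (hadj i j).mp hija
    obtain ⟨hdiag, hwpos, hsat⟩ := hA s(i,j) hmemE
    rcases himp with h | h
    · have hCd : Clin w i (delE g i j) = Clin w i g - w s(i,j) := Clin_delE hija
      have hsi : CE w E i < θ i + w s(i,j) := hsat i (Sym2.mem_mk_left i j)
      rw [← hbridge i] at hsi
      have hmind : min (Clin w i (delE g i j)) (θ i) = Clin w i g - w s(i,j) := by
        rw [hCd]; exact min_eq_left (by linarith)
      have hdeg := deg_delE hija
      have hle := hεle i j hija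
      rw [hutil, hutil, hmind, hdeg] at h
      nlinarith
    · have hCd : Clin w j (delE g j i) = Clin w j g - w s(j,i) := Clin_delE hija.symm
      have hsj : CE w E j < θ j + w s(i,j) := hsat j (Sym2.mem_mk_right i j)
      rw [← hbridge j] at hsj
      have hws : s(j,i) = s(i,j) := Sym2.eq_swap
      have hmind : min (Clin w j (delE g j i)) (θ j) = Clin w j g - w s(j,i) := by
        rw [hCd]; exact min_eq_left (by rw [hws]; linarith)
      have hdeg := deg_delE hija.symm
      have hle := hεle j i hija.symm
      rw [delE_comm] at h
      rw [hutil, hutil, hmind, hdeg] at h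
      nlinarith
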